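/- Suppose w_i ∈ [0,1) with i·(1-w_i) → λ > 0 as i → ∞. Then (1/N)·(1 + Σ_{n=1}^{N-1} Π_{i=n}^{N-1} w_i) → 1/(λ+1) as N → ∞. -/

import Mathlib

open Filter Finset

/-- If `w_i ∈ [0,1)` with `i(1 - w_i) → λ > 0`, then
`(1 + ∑_{n=1}^{N-1} ∏_{i=n}^{N-1} w_i)/N → 1/(λ+1)`. -/
theorem stmt_9 (w : ℕ → ℝ) (lam : ℝ) (hlam : 0 < lam)
    (hw : ∀ i, w i ∈ Set.Ico (0 : ℝ) 1)
    (hlim : Tendsto (fun i : ℕ => (i : ℝ) * (1 - w i)) atTop (nhds lam)) :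
    Tendsto (fun N : ℕ =>
        (1 + ∑ n ∈ Finset.Icc 1 (N - 1), ∏ i ∈ Finset.Icc n (N - 1), w i) / N)
      atTop (nhds (1 / (lam + 1))) := by
  have hlam1 : (0:ℝ) < lam + 1 := by linarith
  set A : ℕ → ℝ := fun N => 1 + ∑ n ∈ Finset.Icc 1 (N-1), ∏ i ∈ Finset.Icc n (N-1), w i with hA
  have hrec : ∀ n : ℕ, A (n+2) = 1 + w (n+1) * A (n+1) := by
    intro n
    have h1 : ∀ m ∈ Finset.Icc 1 (n+1), ∏ i ∈ Finset.Icc m (n+1), w i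
        = (∏ i ∈ Finset.Icc m n, w i) * w (n+1) := by
      intro m hm
      exact Finset.prod_Icc_succ_top (Finset.mem_Icc.mp hm).2 w
    simp only [hA]
    have e1 : (n+2) - 1 = n + 1 := rfl
    have e2 : (n+1) - 1 = n := rfl
    rw [e1, e2, Finset.sum_congr rfl h1, ← Finset.sum_mul,
      Finset.sum_Icc_succ_top (by omega : 1 ≤ n+1)]
    have hemp : ∏ i ∈ Finset.Icc (n+1) n, w i = 1 := by
      rw [Finset.Icc_eq_empty (by omega), Finset.prod_empty]
    rw [hemp]
    ring
  set c : ℕ → ℝ := fun n => A (n+1) - ((n:ℝ)+1)/(lam+1) with hc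
  set e : ℕ → ℝ := fun n => (lam - ((n:ℝ)+1)*(1 - w (n+1)))/(lam+1) with he
  have hcrec : ∀ n : ℕ, c (n+1) = w (n+1) * c n + e n := by
    intro n
    simp only [hc, he, hrec n]
    push_cast
    field_simp
    ring
  have hcbound : ∀ n : ℕ, |c n| ≤ |c 0| + ∑ k ∈ Finset.range n, |e k| := by
    intro n
    induction n with
    | zero => simp
    | succ n ih =>
      rw [Finset.sum_range_succ, hcrec n]
      have hwmem := hw (n+1)
      have hw1 : |w (n+1) * c n| ≤ |c n| := by
        rw [abs_mul]
        have habs : |w (n+1)| ≤ 1 := by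
          rw [abs_of_nonneg hwmem.1]; exact le_of_lt hwmem.2
        nlinarith [abs_nonneg (c n)]
      calc |w (n+1) * c n + e n| ≤ |w (n+1) * c n| + |e n| := abs_add_le _ _
        _ ≤ |c n| + |e n| := by linarith
        _ ≤ |c 0| + ∑ k ∈ Finset.range n, |e k| + |e n| := by linarith
        _ = _ := by ring
  have he0 : Tendsto e atTop (nhds 0) := by
    have h1 : Tendsto (fun n : ℕ => ((n:ℝ)+1) * (1 - w (n+1))) atTop (nhds lam) := by
      have h := hlim.comp (tendsto_add_atTop_nat 1)
      simp only [Function.comp_def] at h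
      push_cast at h
      exact h
    have h2 : Tendsto (fun n : ℕ => (lam - ((n:ℝ)+1)*(1 - w (n+1)))/(lam+1)) atTop
        (nhds ((lam - lam)/(lam+1))) := (tendsto_const_nhds.sub h1).div_const _
    simpa using h2
  have hces : Tendsto (fun n : ℕ => ((n:ℝ)⁻¹) * ∑ k ∈ Finset.range n, |e k|) atTop (nhds 0) := by
    have : Tendsto (fun n => |e n|) atTop (nhds 0) := by simpa using he0.abs
    exact this.cesaro
  have hg : Tendsto (fun n : ℕ => |c 0| / (n:ℝ) + ((n:ℝ)⁻¹) * ∑ k ∈ Finset.range n, |e k|)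
      atTop (nhds 0) := by
    have h1 := tendsto_const_div_atTop_nhds_zero_nat (|c 0|)
    simpa using h1.add hces
  have hcdiv : Tendsto (fun n : ℕ => c n / ((n:ℝ)+1)) atTop (nhds 0) := by
    apply squeeze_zero_norm' _ hg
    filter_upwards [Filter.eventually_ge_atTop 1] with n hn
    have hn0 : (0:ℝ) < n := by exact_mod_cast hn
    have hn1 : (0:ℝ) < (n:ℝ)+1 := by linarith
    have hsum : (0:ℝ) ≤ ∑ k ∈ Finset.range n, |e k| :=
      Finset.sum_nonneg fun k _ => abs_nonneg _
    have key := hcbound n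
    have h3 : |c n| / ((n:ℝ)+1) ≤ (|c 0| + ∑ k ∈ Finset.range n, |e k|) / (n:ℝ) :=
      div_le_div₀ (by positivity) key hn0 (by linarith)
    calc ‖c n / ((n:ℝ)+1)‖ = |c n| / ((n:ℝ)+1) := by
          rw [Real.norm_eq_abs, abs_div, abs_of_pos hn1]
      _ ≤ (|c 0| + ∑ k ∈ Finset.range n, |e k|) / (n:ℝ) := h3
      _ = |c 0| / (n:ℝ) + ((n:ℝ)⁻¹) * ∑ k ∈ Finset.range n, |e k| := by
          field_simp
  have hmain : Tendsto (fun n : ℕ => A (n+1) / ((n:ℝ)+1)) atTop (nhds (1/(lam+1))) := by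
    have h1 : ∀ n : ℕ, A (n+1) / ((n:ℝ)+1) = c n / ((n:ℝ)+1) + 1/(lam+1) := by
      intro n
      have hn1 : ((n:ℝ)+1) ≠ 0 := by positivity
      simp only [hc]
      field_simp
      ring
    simp only [h1]
    simpa using hcdiv.add (tendsto_const_nhds (x := 1/(lam+1)) (f := atTop))
  have hfinal : Tendsto (fun N : ℕ => A N / (N:ℝ)) atTop (nhds (1/(lam+1))) := by
    rw [← tendsto_add_atTop_iff_nat (f := fun N : ℕ => A N / (N:ℝ)) 1]
    have heq : (fun n : ℕ => A (n+1) / ((n+1:ℕ):ℝ)) = fun n : ℕ => A (n+1) / ((n:ℝ)+1) := by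
      funext n; push_cast; ring_nf
    rw [heq]
    exact hmain
  exact hfinal
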